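/- If Z ~ BASLG₂(α), then E(Z⁴) = π⁴(196 + 1240π²α² + 889π⁴α⁴)/(7(60 + 40π²α² + 7π⁴α⁴)). -/

import Mathlib

open Real MeasureTheory Set Nat

theorem bern5 : bernoulli' 5 = 0 := by
  have h : Nat.choose 5 2 = 10 := by decide
  rw [bernoulli'_def]; norm_num [Finset.sum_range_succ, h]

theorem bern6 : bernoulli' 6 = 1/42 := by
  have h1 : Nat.choose 6 2 = 15 := by decide
  have h2 : Nat.choose 6 4 = 15 := by decide
  rw [bernoulli'_def]; norm_num [Finset.sum_range_succ, bern5, h1, h2]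

theorem bern7 : bernoulli' 7 = 0 := by
  have h1 : Nat.choose 7 2 = 21 := by decide
  have h2 : Nat.choose 7 4 = 35 := by decide
  rw [bernoulli'_def]; norm_num [Finset.sum_range_succ, bern5, bern6, h1, h2]

theorem bern8 : bernoulli' 8 = -1/30 := by
  have h1 : Nat.choose 8 2 = 28 := by decide
  have h2 : Nat.choose 8 4 = 70 := by decide
  have h3 : Nat.choose 8 6 = 28 := by decide
  rw [bernoulli'_def]; norm_num [Finset.sum_range_succ, bern5, bern6, bern7, h1, h2, h3]


theorem zeta6 : HasSum (fun n : ℕ => (1 : ℝ) / (n : ℝ) ^ 6) (π ^ 6 / 945) := by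
  have h := hasSum_zeta_nat (k := 3) (by norm_num)
  rw [show 2*3 = 6 from rfl, bernoulli_eq_bernoulli'_of_ne_one (by norm_num), bern6] at h
  norm_num [Nat.factorial] at h
  convert h using 1
  · funext n; rw [one_div]
  · field_simp; ring

theorem zeta8 : HasSum (fun n : ℕ => (1 : ℝ) / (n : ℝ) ^ 8) (π ^ 8 / 9450) := by
  have h := hasSum_zeta_nat (k := 4) (by norm_num)
  rw [show 2*4 = 8 from rfl, bernoulli_eq_bernoulli'_of_ne_one (by norm_num), bern8] at h
  norm_num [Nat.factorial] at h
  convert h using 1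
  · funext n; rw [one_div]
  · field_simp; ring

noncomputable def g (z : ℝ) : ℝ := Real.exp (-z) / (1 + Real.exp (-z)) ^ 2

lemma g_cont : Continuous g := by
  apply Continuous.div (by continuity) (by continuity)
  intro z
  positivity

lemma g_neg (z : ℝ) : g (-z) = g z := by
  unfold g
  rw [neg_neg, Real.exp_neg]
  have h2 := Real.exp_pos z
  field_simp
  ring

lemma g_nonneg (z : ℝ) : 0 ≤ g z := by unfold g; positivity

lemma g_le_exp (z : ℝ) : g z ≤ Real.exp (-z) := by
  unfold g
  rw [div_le_iff₀ (by positivity)]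
  nlinarith [Real.exp_pos (-z), sq_nonneg (Real.exp (-z))]

lemma hasSum_g {z : ℝ} (hz : 0 < z) :
    HasSum (fun j : ℕ => (-1 : ℝ) ^ j * (j + 1) * Real.exp (-((j + 1) * z))) (g z) := by
  set x := Real.exp (-z) with hx
  have hx1 : x < 1 := by
    rw [hx, Real.exp_lt_one_iff]; linarith
  have hx0 : 0 < x := Real.exp_pos _
  have hr : ‖(-x)‖ < 1 := by rw [norm_neg, Real.norm_eq_abs, abs_of_pos hx0]; exact hx1
  have h1 : HasSum (fun n : ℕ => (n : ℝ) * (-x) ^ n) ((-x) / (1 - (-x)) ^ 2) :=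
    hasSum_coe_mul_geometric_of_norm_lt_one hr
  have h2 : HasSum (fun n : ℕ => (-x) ^ n) ((1 - (-x))⁻¹) := hasSum_geometric_of_norm_lt_one hr
  have h3 := (h1.add h2).mul_left x
  have hne : (1 : ℝ) + x ≠ 0 := by positivity
  convert h3 using 1
  · rfl
  · funext n
    have he : Real.exp (-((n + 1 : ℝ) * z)) = x ^ (n + 1) := by
      rw [show -((n + 1 : ℝ) * z) = ((n : ℕ) + 1 : ℕ) * (-z) by push_cast; ring,
        Real.exp_nat_mul, ← hx]
    push_cast
    rw [he]
    rw [show (-x) ^ n = (-1) ^ n * x ^ n by rw [neg_pow]]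
    ring
  · unfold g
    rw [← hx, sub_neg_eq_add]
    field_simp
    ring

lemma integral_pow_exp (n : ℕ) {c : ℝ} (hc : 0 < c) :
    ∫ z in Ioi (0:ℝ), z ^ n * Real.exp (-(c * z)) = (n ! : ℝ) / c ^ (n + 1) := by
  have h := integral_rpow_mul_exp_neg_mul_Ioi (a := (n : ℝ) + 1) (r := c) (by positivity) hc
  rw [show ((n : ℝ) + 1 - 1) = (n : ℝ) by ring] at h
  rw [show (∫ z in Ioi (0:ℝ), z ^ n * Real.exp (-(c * z)))
      = ∫ t in Ioi (0:ℝ), t ^ ((n : ℝ)) * Real.exp (-(c * t)) from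
    setIntegral_congr_fun measurableSet_Ioi (fun t ht => by
      simp only [Real.rpow_natCast]), h]
  rw [Real.Gamma_nat_eq_factorial]
  rw [show ((n : ℝ) + 1) = ((n + 1 : ℕ) : ℝ) by push_cast; ring, Real.rpow_natCast]
  rw [div_pow, one_pow]
  field_simp

lemma integrableOn_pow_exp (n : ℕ) : IntegrableOn (fun z => z ^ n * Real.exp (-z)) (Ioi (0:ℝ)) := by
  have h := Real.GammaIntegral_convergent (s := (n : ℝ) + 1) (by positivity)
  apply h.congr_fun ?_ measurableSet_Ioi
  intro t ht
  show Real.exp (-t) * t ^ ((n : ℝ) + 1 - 1) = t ^ n * Real.exp (-t)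
  rw [show ((n : ℝ) + 1 - 1) = (n : ℝ) by ring, Real.rpow_natCast]
  ring

lemma hasSum_eta {m : ℕ} (hm : 1 ≤ m) {Z : ℝ}
    (hZ : HasSum (fun n : ℕ => 1 / (n : ℝ) ^ m) Z) :
    HasSum (fun j : ℕ => (-1 : ℝ) ^ j / ((j : ℝ) + 1) ^ m) ((1 - 2 / 2 ^ m) * Z) := by
  have hm0 : m ≠ 0 := by omega
  set b : ℕ → ℝ := fun n => if Even n then 2 / (n : ℝ) ^ m else 0 with hb
  have h2inj : Function.Injective (fun n : ℕ => 2 * n) := fun a b h => by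
    simp only [] at h; omega
  have hb_sum : HasSum b (2 / 2 ^ m * Z) := by
    have hvanish : ∀ n ∉ Set.range (fun n : ℕ => 2 * n), b n = 0 := by
      intro n hn
      have : ¬ Even n := by
        simp only [Set.mem_range] at hn
        intro ⟨k, hk⟩
        exact hn ⟨k, by omega⟩
      simp only [hb, if_neg this]
    rw [← Function.Injective.hasSum_iff h2inj hvanish]
    convert hZ.mul_left (2 / 2 ^ m) using 1
    · rfl
    funext n
    simp only [hb, Function.comp_apply, if_pos (even_two_mul n)]
    rcases Nat.eq_zero_or_pos n with rfl | hn
    · simp [zero_pow hm0]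
    · have hc : ((2 * n : ℕ) : ℝ) ^ m = 2 ^ m * (n : ℝ) ^ m := by
        push_cast; rw [mul_pow]
      rw [hc]
      have h1 : (2 : ℝ) ^ m ≠ 0 := by positivity
      have h2 : ((n : ℝ)) ^ m ≠ 0 := by
        have : (0:ℝ) < (n:ℝ) := by exact_mod_cast hn
        positivity
      field_simp
  have ha : HasSum (fun n : ℕ => (-1 : ℝ) ^ (n + 1) / (n : ℝ) ^ m) (Z - 2 / 2 ^ m * Z) := by
    have h := hZ.sub hb_sum
    convert h using 1
    · rfl
    funext n
    simp only [hb]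
    rcases Nat.even_or_odd n with he | ho
    · rw [if_pos he, (he.add_one).neg_one_pow]
      ring
    · rw [if_neg (by simpa using ho), Even.neg_one_pow (by simpa using ho.add_one)]
      ring
  have h0 : ((-1 : ℝ) ^ (0 + 1) / ((0 : ℕ) : ℝ) ^ m) = 0 := by
    simp [zero_pow hm0]
  have hshift : HasSum (fun j : ℕ => (-1 : ℝ) ^ (j + 1 + 1) / ((j + 1 : ℕ) : ℝ) ^ m)
      (Z - 2 / 2 ^ m * Z) := by
    apply (hasSum_nat_add_iff (f := fun n : ℕ => (-1:ℝ)^(n+1)/(n:ℝ)^m) 1).mpr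
    convert ha using 1
    · rfl
    simp [zero_pow hm0]
  convert hshift using 1
  · funext j
    push_cast
    rw [pow_succ, pow_succ]
    ring
  · ring

lemma integrableOn_pow_exp_c (n : ℕ) {c : ℝ} (hc : 1 ≤ c) :
    IntegrableOn (fun z => z ^ n * Real.exp (-(c * z))) (Ioi (0:ℝ)) := by
  apply Integrable.mono' (integrableOn_pow_exp n)
  · exact (Continuous.aestronglyMeasurable (by continuity)).restrict
  · filter_upwards [ae_restrict_mem measurableSet_Ioi] with z hz
    have hz0 : (0:ℝ) < z := hz
    rw [Real.norm_eq_abs, abs_mul, abs_of_nonneg (by positivity : (0:ℝ) ≤ z ^ n),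
      abs_of_nonneg (Real.exp_nonneg _)]
    have : Real.exp (-(c * z)) ≤ Real.exp (-z) := by
      apply Real.exp_le_exp.mpr
      nlinarith
    exact mul_le_mul_of_nonneg_left this (by positivity)

lemma integral_Ioi_pow_g (n : ℕ) (hn : 2 ≤ n) {E : ℝ}
    (hE : HasSum (fun j : ℕ => (-1 : ℝ) ^ j / ((j : ℝ) + 1) ^ n) E) :
    ∫ z in Ioi (0:ℝ), z ^ n * g z = (n ! : ℝ) * E := by
  set μ := (volume : Measure ℝ).restrict (Ioi 0) with hμ
  set F : ℕ → ℝ → ℝ := fun j z => z ^ n * ((-1 : ℝ) ^ j * ((j : ℝ) + 1) * Real.exp (-(((j : ℝ) + 1) * z))) with hF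
  have hFeq : ∀ j, F j = fun z => ((-1 : ℝ) ^ j * ((j : ℝ) + 1)) * (z ^ n * Real.exp (-(((j : ℝ) + 1) * z))) := by
    intro j; funext z; simp only [hF]; ring
  have hc1 : ∀ j : ℕ, (1:ℝ) ≤ (j : ℝ) + 1 := by
    intro j; have : (0:ℝ) ≤ (j:ℝ) := Nat.cast_nonneg j; linarith
  have hc0 : ∀ j : ℕ, (0:ℝ) < (j : ℝ) + 1 := fun j => lt_of_lt_of_le one_pos (hc1 j)
  have hF_int : ∀ j : ℕ, Integrable (F j) μ := by
    intro j
    rw [hFeq j]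
    exact ((integrableOn_pow_exp_c n (hc1 j)).const_mul _)
  have hF_norm : ∀ j : ℕ, ∫ z, ‖F j z‖ ∂μ = (n ! : ℝ) / ((j : ℝ) + 1) ^ n := by
    intro j
    have : ∀ z ∈ Ioi (0:ℝ), ‖F j z‖ = ((j : ℝ) + 1) * (z ^ n * Real.exp (-(((j : ℝ) + 1) * z))) := by
      intro z hz
      have hz0 : (0:ℝ) < z := hz
      simp only [hF]
      rw [Real.norm_eq_abs, abs_mul, abs_mul, abs_mul, abs_pow, abs_pow, abs_neg, abs_one,
        one_pow, abs_of_nonneg (by positivity : (0:ℝ) ≤ (j:ℝ)+1),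
        abs_of_nonneg (Real.exp_nonneg _), abs_of_pos hz0]
      ring
    rw [hμ, setIntegral_congr_fun measurableSet_Ioi this, integral_const_mul,
      integral_pow_exp n (hc0 j)]
    rw [pow_succ]
    have h1 : ((j:ℝ)+1) ^ n ≠ 0 := by positivity
    field_simp
  have hF_sum : Summable (fun j => ∫ z, ‖F j z‖ ∂μ) := by
    simp only [hF_norm]
    apply Summable.mul_left
    have h := (Real.summable_one_div_nat_pow (p := n)).mpr hn
    have := (summable_nat_add_iff (f := fun n_1 : ℕ => 1 / (n_1 : ℝ) ^ n) 1).mpr h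
    apply this.congr
    intro j
    push_cast
    rw [one_div]
  have hkey := MeasureTheory.hasSum_integral_of_summable_integral_norm hF_int hF_sum
  have hval : ∀ j : ℕ, ∫ z, F j z ∂μ = (n ! : ℝ) * ((-1 : ℝ) ^ j / ((j : ℝ) + 1) ^ n) := by
    intro j
    rw [hFeq j, hμ]
    rw [MeasureTheory.integral_const_mul, integral_pow_exp n (hc0 j), pow_succ]
    have h1 : ((j:ℝ)+1) ^ n ≠ 0 := by positivity
    field_simp
  have htsum : ∫ z, (∑' j, F j z) ∂μ = ∫ z in Ioi (0:ℝ), z ^ n * g z := by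
    rw [hμ]
    apply setIntegral_congr_fun measurableSet_Ioi
    intro z hz
    exact ((hasSum_g hz).mul_left (z ^ n)).tsum_eq
  rw [← htsum]
  apply HasSum.unique _ (hE.mul_left (n ! : ℝ))
  simp only [hval] at hkey
  exact hkey

lemma integrableOn_pow_g_Ioi (n : ℕ) : IntegrableOn (fun z => z ^ n * g z) (Ioi (0:ℝ)) := by
  apply Integrable.mono' (integrableOn_pow_exp n)
  · exact (Continuous.aestronglyMeasurable (by exact (continuous_pow n).mul g_cont)).restrict
  · filter_upwards [ae_restrict_mem measurableSet_Ioi] with z hz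
    have hz0 : (0:ℝ) < z := hz
    rw [Real.norm_eq_abs, abs_mul, abs_of_nonneg (by positivity : (0:ℝ) ≤ z ^ n),
      abs_of_nonneg (g_nonneg z)]
    exact mul_le_mul_of_nonneg_left (g_le_exp z) (by positivity)

lemma integrable_pow_g (n : ℕ) : Integrable (fun z => z ^ n * g z) := by
  rw [← integrableOn_univ, ← Iic_union_Ioi (a := (0:ℝ)), integrableOn_union]
  refine ⟨?_, integrableOn_pow_g_Ioi n⟩
  rw [← (Measure.measurePreserving_neg (volume : Measure ℝ)).integrableOn_comp_preimage
      (Homeomorph.neg ℝ).measurableEmbedding]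
  simp only [Function.comp_def, neg_preimage, neg_Iic, neg_zero]
  rw [show (fun x : ℝ => (-x) ^ n * g (-x)) = fun x => (-1:ℝ) ^ n * (x ^ n * g x) from
    funext fun x => by rw [g_neg, neg_pow]; ring]
  rw [integrableOn_Ici_iff_integrableOn_Ioi]
  exact (integrableOn_pow_g_Ioi n).const_mul _

lemma integral_pow_g_split (n : ℕ) :
    ∫ z, z ^ n * g z = (1 + (-1:ℝ) ^ n) * ∫ z in Ioi (0:ℝ), z ^ n * g z := by
  have hIic : IntegrableOn (fun z => z ^ n * g z) (Iic (0:ℝ)) :=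
    (integrable_pow_g n).integrableOn
  have h1 : ∫ z in Iic (0:ℝ), z ^ n * g z = (-1:ℝ) ^ n * ∫ z in Ioi (0:ℝ), z ^ n * g z := by
    have h2 : ∫ z in Iic (0:ℝ), z ^ n * g z
        = ∫ z in Iic (0:ℝ), (-1:ℝ) ^ n * ((-z) ^ n * g (-z)) := by
      apply setIntegral_congr_fun measurableSet_Iic
      intro z _
      show z ^ n * g z = (-1:ℝ) ^ n * ((-z) ^ n * g (-z))
      rw [g_neg, ← mul_assoc, ← mul_pow, neg_mul_neg, one_mul]
    rw [h2, integral_const_mul]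
    congr 1
    have := integral_comp_neg_Iic (0:ℝ) (fun z => z ^ n * g z)
    rw [neg_zero] at this
    exact this
  rw [← intervalIntegral.integral_Iic_add_Ioi (b := (0:ℝ)) hIic (integrableOn_pow_g_Ioi n), h1]
  ring

lemma moment4 : ∫ z, z ^ 4 * g z = 7 * π ^ 4 / 15 := by
  have hη := hasSum_eta (m := 4) (by norm_num) hasSum_zeta_four
  rw [integral_pow_g_split, integral_Ioi_pow_g 4 (by norm_num) hη]
  norm_num [Nat.factorial]
  ring

lemma moment6 : ∫ z, z ^ 6 * g z = 31 * π ^ 6 / 21 := by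
  have hη := hasSum_eta (m := 6) (by norm_num) zeta6
  rw [integral_pow_g_split, integral_Ioi_pow_g 6 (by norm_num) hη]
  norm_num [Nat.factorial]
  ring

lemma moment8 : ∫ z, z ^ 8 * g z = 127 * π ^ 8 / 15 := by
  have hη := hasSum_eta (m := 8) (by norm_num) zeta8
  rw [integral_pow_g_split, integral_Ioi_pow_g 8 (by norm_num) hη]
  norm_num [Nat.factorial]
  ring

lemma moment5 : ∫ z, z ^ 5 * g z = 0 := by
  rw [integral_pow_g_split]
  norm_num

lemma moment7 : ∫ z, z ^ 7 * g z = 0 := by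
  rw [integral_pow_g_split]
  norm_num


open Real MeasureTheory

noncomputable def C₂ (α : ℝ) : ℝ := (60 + 40 * π ^ 2 * α ^ 2 + 7 * π ^ 4 * α ^ 4) / 15

noncomputable def f (z α : ℝ) : ℝ :=
  ((1 - α * z) ^ 2 + 1) ^ 2 * Real.exp (-z) / (C₂ α * (1 + Real.exp (-z)) ^ 2)

theorem BASLG2_fourth_moment (α : ℝ) :
    ∫ z : ℝ, z ^ 4 * f z α
      = π ^ 4 * (196 + 1240 * π ^ 2 * α ^ 2 + 889 * π ^ 4 * α ^ 4)
        / (7 * (60 + 40 * π ^ 2 * α ^ 2 + 7 * π ^ 4 * α ^ 4)) := by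
  have hπ := Real.pi_pos
  have hS : (0:ℝ) < 60 + 40 * π ^ 2 * α ^ 2 + 7 * π ^ 4 * α ^ 4 := by positivity
  have hC : C₂ α ≠ 0 := by unfold C₂; positivity
  have hint : (fun z : ℝ => z ^ 4 * f z α) = fun z =>
      (C₂ α)⁻¹ * (α ^ 4 * (z ^ 8 * g z) + ((-4) * α ^ 3 * (z ^ 7 * g z)
        + (8 * α ^ 2 * (z ^ 6 * g z) + ((-8) * α * (z ^ 5 * g z) + 4 * (z ^ 4 * g z))))) := by
    funext z
    unfold f g
    have hD : (0:ℝ) < (1 + Real.exp (-z)) ^ 2 := by positivity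
    field_simp
    ring
  rw [hint, integral_const_mul]
  have hI : ∀ n : ℕ, Integrable (fun z : ℝ => z ^ n * g z) := integrable_pow_g
  have h8 : Integrable (fun z : ℝ => α ^ 4 * (z ^ 8 * g z)) := (hI 8).const_mul _
  have h7 : Integrable (fun z : ℝ => (-4) * α ^ 3 * (z ^ 7 * g z)) := (hI 7).const_mul _
  have h6 : Integrable (fun z : ℝ => 8 * α ^ 2 * (z ^ 6 * g z)) := (hI 6).const_mul _
  have h5 : Integrable (fun z : ℝ => (-8) * α * (z ^ 5 * g z)) := (hI 5).const_mul _
  have h4 : Integrable (fun z : ℝ => 4 * (z ^ 4 * g z)) := (hI 4).const_mul _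
  have e1 : ∫ z : ℝ, (α ^ 4 * (z ^ 8 * g z) + ((-4) * α ^ 3 * (z ^ 7 * g z)
        + (8 * α ^ 2 * (z ^ 6 * g z) + ((-8) * α * (z ^ 5 * g z) + 4 * (z ^ 4 * g z)))))
      = (∫ z : ℝ, α ^ 4 * (z ^ 8 * g z)) + ∫ z : ℝ, ((-4) * α ^ 3 * (z ^ 7 * g z)
        + (8 * α ^ 2 * (z ^ 6 * g z) + ((-8) * α * (z ^ 5 * g z) + 4 * (z ^ 4 * g z)))) :=
    integral_add h8 (h7.add (h6.add (h5.add h4)))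
  have e2 : ∫ z : ℝ, ((-4) * α ^ 3 * (z ^ 7 * g z)
        + (8 * α ^ 2 * (z ^ 6 * g z) + ((-8) * α * (z ^ 5 * g z) + 4 * (z ^ 4 * g z))))
      = (∫ z : ℝ, (-4) * α ^ 3 * (z ^ 7 * g z)) + ∫ z : ℝ, (8 * α ^ 2 * (z ^ 6 * g z)
        + ((-8) * α * (z ^ 5 * g z) + 4 * (z ^ 4 * g z))) :=
    integral_add h7 (h6.add (h5.add h4))
  have e3 : ∫ z : ℝ, (8 * α ^ 2 * (z ^ 6 * g z) + ((-8) * α * (z ^ 5 * g z) + 4 * (z ^ 4 * g z)))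
      = (∫ z : ℝ, 8 * α ^ 2 * (z ^ 6 * g z))
        + ∫ z : ℝ, ((-8) * α * (z ^ 5 * g z) + 4 * (z ^ 4 * g z)) :=
    integral_add h6 (h5.add h4)
  have e4 : ∫ z : ℝ, ((-8) * α * (z ^ 5 * g z) + 4 * (z ^ 4 * g z))
      = (∫ z : ℝ, (-8) * α * (z ^ 5 * g z)) + ∫ z : ℝ, 4 * (z ^ 4 * g z) :=
    integral_add h5 h4
  rw [e1, e2, e3, e4, integral_const_mul, integral_const_mul, integral_const_mul,
    integral_const_mul, integral_const_mul, moment4, moment5, moment6, moment7, moment8]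
  unfold C₂
  field_simp
  ring
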